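/- Let W > 0, H > 0, let σ > 0 and κ > 0 be real constants, and let a > 0, b > 0, E ∈ ℝ. Let Q = [0,W] × [0,H] ⊂ ℝ². Suppose (φe¹, φl¹) and (φe², φl²) are pairs of functions ℝ² → ℝ, each C² on an open set containing Q, satisfying for all p ∈ Q: σ·Δφe(p) = a·sinh(b·(φe(p) − φl(p) − E)) and κ·Δφl(p) = −a·sinh(b·(φe(p) − φl(p) − E)), where Δ denotes the Laplacian (sum of the two pure second partial derivatives). Suppose further that the normal derivatives of the two solutions agree on the boundary of Q: ∂φe¹/∂x = ∂φe²/∂x and ∂φl¹/∂x = ∂φl²/∂x at all points of {0,W} × [0,H], and ∂φe¹/∂y = ∂φe²/∂y and ∂φl¹/∂y = ∂φl²/∂y at all points of [0,W] × {0,H}. Then there exists a constant C ∈ ℝ such that φe¹ = φe² + C and φl¹ = φl² + C on Q. -/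

import Mathlib

open Set

noncomputable section

/-- Partial derivative in the first coordinate of `f : ℝ × ℝ → ℝ`. -/
def pderivX (f : ℝ × ℝ → ℝ) : ℝ × ℝ → ℝ := fun p => deriv (fun t => f (t, p.2)) p.1

/-- Partial derivative in the second coordinate of `f : ℝ × ℝ → ℝ`. -/
def pderivY (f : ℝ × ℝ → ℝ) : ℝ × ℝ → ℝ := fun p => deriv (fun t => f (p.1, t)) p.2

/-- Laplacian of `f : ℝ × ℝ → ℝ`: sum of the two pure second partial derivatives. -/
def lap (f : ℝ × ℝ → ℝ) : ℝ × ℝ → ℝ := fun p => pderivX (pderivX f) p + pderivY (pderivY f) p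

/-! ### Auxiliary lemmas -/

/-- Fréchet-based first partial in `x`. -/
def fX (f : ℝ × ℝ → ℝ) : ℝ × ℝ → ℝ := fun p => fderiv ℝ f p (1, 0)
/-- Fréchet-based first partial in `y`. -/
def fY (f : ℝ × ℝ → ℝ) : ℝ × ℝ → ℝ := fun p => fderiv ℝ f p (0, 1)

lemma pderivX_eq {g : ℝ × ℝ → ℝ} {p : ℝ × ℝ} (hg : DifferentiableAt ℝ g p) :
    pderivX g p = fderiv ℝ g p (1, 0) := by
  have h1 : HasDerivAt (fun t : ℝ => (t, p.2)) ((1:ℝ), (0:ℝ)) p.1 :=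
    (hasDerivAt_id p.1).prodMk (hasDerivAt_const _ _)
  have h2 : HasFDerivAt g (fderiv ℝ g p) (p.1, p.2) := by
    rw [Prod.mk.eta]; exact hg.hasFDerivAt
  exact (h2.comp_hasDerivAt p.1 h1).deriv

lemma pderivY_eq {g : ℝ × ℝ → ℝ} {p : ℝ × ℝ} (hg : DifferentiableAt ℝ g p) :
    pderivY g p = fderiv ℝ g p (0, 1) := by
  have h1 : HasDerivAt (fun t : ℝ => (p.1, t)) ((0:ℝ), (1:ℝ)) p.2 :=
    (hasDerivAt_const _ _).prodMk (hasDerivAt_id p.2)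
  have h2 : HasFDerivAt g (fderiv ℝ g p) (p.1, p.2) := by
    rw [Prod.mk.eta]; exact hg.hasFDerivAt
  exact (h2.comp_hasDerivAt p.2 h1).deriv

lemma fX_contDiffOn {f : ℝ × ℝ → ℝ} {U : Set (ℝ × ℝ)} (hU : IsOpen U)
    (hf : ContDiffOn ℝ 2 f U) : ContDiffOn ℝ 1 (fX f) U := by
  have h1 : ContDiffOn ℝ 1 (fun p => fderiv ℝ f p) U :=
    hf.fderiv_of_isOpen hU (by norm_num)
  exact (ContinuousLinearMap.apply ℝ ℝ ((1:ℝ), (0:ℝ))).contDiff.comp_contDiffOn h1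

lemma fY_contDiffOn {f : ℝ × ℝ → ℝ} {U : Set (ℝ × ℝ)} (hU : IsOpen U)
    (hf : ContDiffOn ℝ 2 f U) : ContDiffOn ℝ 1 (fY f) U := by
  have h1 : ContDiffOn ℝ 1 (fun p => fderiv ℝ f p) U :=
    hf.fderiv_of_isOpen hU (by norm_num)
  exact (ContinuousLinearMap.apply ℝ ℝ ((0:ℝ), (1:ℝ))).contDiff.comp_contDiffOn h1

lemma diffAt_of_c2 {f : ℝ × ℝ → ℝ} {U : Set (ℝ × ℝ)} (hU : IsOpen U)
    (hf : ContDiffOn ℝ 2 f U) {p : ℝ × ℝ} (hp : p ∈ U) : DifferentiableAt ℝ f p :=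
  (hf.differentiableOn (by norm_num)).differentiableAt (hU.mem_nhds hp)

lemma diffAt_of_c1 {f : ℝ × ℝ → ℝ} {U : Set (ℝ × ℝ)} (hU : IsOpen U)
    (hf : ContDiffOn ℝ 1 f U) {p : ℝ × ℝ} (hp : p ∈ U) : DifferentiableAt ℝ f p :=
  (hf.differentiableOn (by norm_num)).differentiableAt (hU.mem_nhds hp)

lemma lap_eq {f : ℝ × ℝ → ℝ} {U : Set (ℝ × ℝ)} (hU : IsOpen U)
    (hf : ContDiffOn ℝ 2 f U) {p : ℝ × ℝ} (hp : p ∈ U) :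
    lap f p = fderiv ℝ (fX f) p (1, 0) + fderiv ℝ (fY f) p (0, 1) := by
  have hev : ∀ q ∈ U, pderivX f q = fX f q := fun q hq => pderivX_eq (diffAt_of_c2 hU hf hq)
  have hevY : ∀ q ∈ U, pderivY f q = fY f q := fun q hq => pderivY_eq (diffAt_of_c2 hU hf hq)
  have hXX : pderivX (pderivX f) p = fderiv ℝ (fX f) p (1, 0) := by
    have hne : (fun q => pderivX f q) =ᶠ[nhds p] fX f :=
      Filter.eventuallyEq_of_mem (hU.mem_nhds hp) hev
    have hl : Filter.Tendsto (fun t : ℝ => (t, p.2)) (nhds p.1) (nhds p) := by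
      rw [← Prod.mk.eta (p := p)]
      exact ((continuous_id.prodMk continuous_const).tendsto p.1)
    have hne' : (fun t : ℝ => pderivX f (t, p.2)) =ᶠ[nhds p.1]
        (fun t : ℝ => fX f (t, p.2)) := hne.comp_tendsto hl
    have : pderivX (pderivX f) p = pderivX (fX f) p := hne'.deriv_eq
    rw [this, pderivX_eq (diffAt_of_c1 hU (fX_contDiffOn hU hf) hp)]
  have hYY : pderivY (pderivY f) p = fderiv ℝ (fY f) p (0, 1) := by
    have hne : (fun q => pderivY f q) =ᶠ[nhds p] fY f :=
      Filter.eventuallyEq_of_mem (hU.mem_nhds hp) hevY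
    have hl : Filter.Tendsto (fun t : ℝ => (p.1, t)) (nhds p.2) (nhds p) := by
      rw [← Prod.mk.eta (p := p)]
      exact ((continuous_const.prodMk continuous_id).tendsto p.2)
    have hne' : (fun t : ℝ => pderivY f (p.1, t)) =ᶠ[nhds p.2]
        (fun t : ℝ => fY f (p.1, t)) := hne.comp_tendsto hl
    have : pderivY (pderivY f) p = pderivY (fY f) p := hne'.deriv_eq
    rw [this, pderivY_eq (diffAt_of_c1 hU (fY_contDiffOn hU hf) hp)]
  rw [lap, hXX, hYY]

lemma sinh_mul_nonneg (x y : ℝ) : 0 ≤ (Real.sinh x - Real.sinh y) * (x - y) := by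
  rcases lt_trichotomy x y with h | h | h
  · have := Real.sinh_lt_sinh.2 h
    nlinarith
  · simp [h]
  · have := Real.sinh_lt_sinh.2 h
    nlinarith

lemma sinh_mul_eq_zero {x y : ℝ} (h : (Real.sinh x - Real.sinh y) * (x - y) = 0) : x = y := by
  rcases lt_trichotomy x y with h' | h' | h'
  · have := Real.sinh_lt_sinh.2 h'
    nlinarith
  · exact h'
  · have := Real.sinh_lt_sinh.2 h'
    nlinarith

lemma clm_eq_zero {L : ℝ × ℝ →L[ℝ] ℝ} (h1 : L (1, 0) = 0) (h2 : L (0, 1) = 0) : L = 0 := by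
  apply ContinuousLinearMap.ext
  rintro ⟨x, y⟩
  have hv : ((x, y) : ℝ × ℝ) = x • ((1:ℝ), (0:ℝ)) + y • ((0:ℝ), (1:ℝ)) := by
    simp [Prod.ext_iff]
  rw [hv, map_add, map_smul, map_smul, h1, h2]
  simp

lemma sum_sq_zero_aux {σ κ A B C D T : ℝ} (hσ : 0 < σ) (hκ : 0 < κ) (hT : 0 ≤ T)
    (h0 : σ * (A ^ 2 + B ^ 2) + κ * (C ^ 2 + D ^ 2) + T = 0) :
    A = 0 ∧ B = 0 ∧ C = 0 ∧ D = 0 ∧ T = 0 := by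
  have s1 := sq_nonneg A; have s2 := sq_nonneg B
  have s3 := sq_nonneg C; have s4 := sq_nonneg D
  have e1 : A ^ 2 = 0 := le_antisymm (by nlinarith) s1
  have e2 : B ^ 2 = 0 := le_antisymm (by nlinarith) s2
  have e3 : C ^ 2 = 0 := le_antisymm (by nlinarith) s3
  have e4 : D ^ 2 = 0 := le_antisymm (by nlinarith) s4
  refine ⟨pow_eq_zero_iff two_ne_zero |>.mp e1, pow_eq_zero_iff two_ne_zero |>.mp e2,
    pow_eq_zero_iff two_ne_zero |>.mp e3, pow_eq_zero_iff two_ne_zero |>.mp e4, by nlinarith⟩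

lemma sum_sq_nonneg_aux {σ κ A B C D T : ℝ} (hσ : 0 < σ) (hκ : 0 < κ) (hT : 0 ≤ T) :
    0 ≤ σ * (A ^ 2 + B ^ 2) + κ * (C ^ 2 + D ^ 2) + T := by
  have h1 : 0 ≤ σ * (A ^ 2 + B ^ 2) := mul_nonneg hσ.le (by positivity)
  have h2 : 0 ≤ κ * (C ^ 2 + D ^ 2) := mul_nonneg hκ.le (by positivity)
  linarith

set_option maxHeartbeats 1000000 in
/-- 2D constant-conductivity uniqueness: two solutions of the coupled porous-electrode
Poisson system on the rectangle `Q = [0,W] × [0,H]` with the same Neumann data on `∂Q`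
coincide up to a shared additive constant. -/
theorem uniqueness_up_to_shared_constant_2D
    (W H : ℝ) (hW : 0 < W) (hH : 0 < H)
    (σ κ : ℝ) (hσ : 0 < σ) (hκ : 0 < κ)
    (a b E : ℝ) (ha : 0 < a) (hb : 0 < b)
    (φe₁ φl₁ φe₂ φl₂ : ℝ × ℝ → ℝ)
    (U : Set (ℝ × ℝ)) (hU : IsOpen U) (hQU : Icc (0:ℝ) W ×ˢ Icc (0:ℝ) H ⊆ U)
    (hφe₁ : ContDiffOn ℝ 2 φe₁ U) (hφl₁ : ContDiffOn ℝ 2 φl₁ U)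
    (hφe₂ : ContDiffOn ℝ 2 φe₂ U) (hφl₂ : ContDiffOn ℝ 2 φl₂ U)
    (heq₁ : ∀ p ∈ Icc (0:ℝ) W ×ˢ Icc (0:ℝ) H,
      σ * lap φe₁ p = a * Real.sinh (b * (φe₁ p - φl₁ p - E)) ∧
      κ * lap φl₁ p = -(a * Real.sinh (b * (φe₁ p - φl₁ p - E))))
    (heq₂ : ∀ p ∈ Icc (0:ℝ) W ×ˢ Icc (0:ℝ) H,
      σ * lap φe₂ p = a * Real.sinh (b * (φe₂ p - φl₂ p - E)) ∧
      κ * lap φl₂ p = -(a * Real.sinh (b * (φe₂ p - φl₂ p - E))))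
    (hbcX : ∀ x ∈ ({0, W} : Set ℝ), ∀ y ∈ Icc (0:ℝ) H,
      pderivX φe₁ (x, y) = pderivX φe₂ (x, y) ∧ pderivX φl₁ (x, y) = pderivX φl₂ (x, y))
    (hbcY : ∀ x ∈ Icc (0:ℝ) W, ∀ y ∈ ({0, H} : Set ℝ),
      pderivY φe₁ (x, y) = pderivY φe₂ (x, y) ∧ pderivY φl₁ (x, y) = pderivY φl₂ (x, y)) :
    ∃ C : ℝ, ∀ p ∈ Icc (0:ℝ) W ×ˢ Icc (0:ℝ) H,
      φe₁ p = φe₂ p + C ∧ φl₁ p = φl₂ p + C := by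
  have hQi_open : IsOpen (Ioo (0:ℝ) W ×ˢ Ioo (0:ℝ) H) := isOpen_Ioo.prod isOpen_Ioo
  have hQiQ : Ioo (0:ℝ) W ×ˢ Ioo (0:ℝ) H ⊆ Icc (0:ℝ) W ×ˢ Icc (0:ℝ) H :=
    prod_mono Ioo_subset_Icc_self Ioo_subset_Icc_self
  have hQiU : Ioo (0:ℝ) W ×ˢ Ioo (0:ℝ) H ⊆ U := hQiQ.trans hQU
  set u : ℝ × ℝ → ℝ := fun p => φe₁ p - φe₂ p with hu_def
  set v : ℝ × ℝ → ℝ := fun p => φl₁ p - φl₂ p with hv_def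
  have hu : ContDiffOn ℝ 2 u U := hφe₁.sub hφe₂
  have hv : ContDiffOn ℝ 2 v U := hφl₁.sub hφl₂
  set S : ℝ × ℝ → ℝ := fun p =>
    Real.sinh (b * (φe₁ p - φl₁ p - E)) - Real.sinh (b * (φe₂ p - φl₂ p - E)) with hS_def
  -- first partials are differences
  have hfXu : ∀ q ∈ U, fX u q = fX φe₁ q - fX φe₂ q := by
    intro q hq
    simp only [fX, hu_def]
    rw [fderiv_fun_sub (diffAt_of_c2 hU hφe₁ hq) (diffAt_of_c2 hU hφe₂ hq)]
    simp
  have hfYu : ∀ q ∈ U, fY u q = fY φe₁ q - fY φe₂ q := by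
    intro q hq
    simp only [fY, hu_def]
    rw [fderiv_fun_sub (diffAt_of_c2 hU hφe₁ hq) (diffAt_of_c2 hU hφe₂ hq)]
    simp
  have hfXv : ∀ q ∈ U, fX v q = fX φl₁ q - fX φl₂ q := by
    intro q hq
    simp only [fX, hv_def]
    rw [fderiv_fun_sub (diffAt_of_c2 hU hφl₁ hq) (diffAt_of_c2 hU hφl₂ hq)]
    simp
  have hfYv : ∀ q ∈ U, fY v q = fY φl₁ q - fY φl₂ q := by
    intro q hq
    simp only [fY, hv_def]
    rw [fderiv_fun_sub (diffAt_of_c2 hU hφl₁ hq) (diffAt_of_c2 hU hφl₂ hq)]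
    simp
  -- second-order linearity
  have hsecond : ∀ (f g : ℝ × ℝ → ℝ), ContDiffOn ℝ 2 f U → ContDiffOn ℝ 2 g U →
      (∀ q ∈ U, fX (fun p => f p - g p) q = fX f q - fX g q) →
      (∀ q ∈ U, fY (fun p => f p - g p) q = fY f q - fY g q) →
      ∀ q ∈ U,
        fderiv ℝ (fX fun p => f p - g p) q (1, 0) + fderiv ℝ (fY fun p => f p - g p) q (0, 1)
          = lap f q - lap g q := by
    intro f g hf hg hX hY q hq
    have hXf := fX_contDiffOn hU hf
    have hXg := fX_contDiffOn hU hg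
    have hYf := fY_contDiffOn hU hf
    have hYg := fY_contDiffOn hU hg
    have e1 : fderiv ℝ (fX fun p => f p - g p) q = fderiv ℝ (fun r => fX f r - fX g r) q :=
      Filter.EventuallyEq.fderiv_eq (Filter.eventuallyEq_of_mem (hU.mem_nhds hq) hX)
    have e2 : fderiv ℝ (fY fun p => f p - g p) q = fderiv ℝ (fun r => fY f r - fY g r) q :=
      Filter.EventuallyEq.fderiv_eq (Filter.eventuallyEq_of_mem (hU.mem_nhds hq) hY)
    rw [e1, e2, fderiv_fun_sub (diffAt_of_c1 hU hXf hq) (diffAt_of_c1 hU hXg hq),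
      fderiv_fun_sub (diffAt_of_c1 hU hYf hq) (diffAt_of_c1 hU hYg hq),
      lap_eq hU hf hq, lap_eq hU hg hq]
    simp only [ContinuousLinearMap.sub_apply]
    ring
  -- PDE for the differences
  have key : ∀ q ∈ Icc (0:ℝ) W ×ˢ Icc (0:ℝ) H,
      σ * (fderiv ℝ (fX u) q (1, 0) + fderiv ℝ (fY u) q (0, 1)) = a * S q ∧
      κ * (fderiv ℝ (fX v) q (1, 0) + fderiv ℝ (fY v) q (0, 1)) = -(a * S q) := by
    intro q hq
    have hqU : q ∈ U := hQU hq
    have h1 := hsecond φe₁ φe₂ hφe₁ hφe₂ hfXu hfYu q hqU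
    have h2 := hsecond φl₁ φl₂ hφl₁ hφl₂ hfXv hfYv q hqU
    have p1 := (heq₁ q hq).1
    have p2 := (heq₂ q hq).1
    have p3 := (heq₁ q hq).2
    have p4 := (heq₂ q hq).2
    constructor
    · rw [h1, hS_def]; ring_nf; ring_nf at p1 p2; nlinarith [p1, p2]
    · rw [h2, hS_def]; ring_nf; ring_nf at p3 p4; nlinarith [p3, p4]
  -- the vector field and its derivative
  set F : ℝ × ℝ → ℝ := fun p => σ * (u p * fX u p) + κ * (v p * fX v p) with hF_def
  set G : ℝ × ℝ → ℝ := fun p => σ * (u p * fY u p) + κ * (v p * fY v p) with hG_def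
  set F' : ℝ × ℝ → (ℝ × ℝ →L[ℝ] ℝ) := fun p =>
    σ • (u p • fderiv ℝ (fX u) p + fX u p • fderiv ℝ u p) +
    κ • (v p • fderiv ℝ (fX v) p + fX v p • fderiv ℝ v p) with hF'_def
  set G' : ℝ × ℝ → (ℝ × ℝ →L[ℝ] ℝ) := fun p =>
    σ • (u p • fderiv ℝ (fY u) p + fY u p • fderiv ℝ u p) +
    κ • (v p • fderiv ℝ (fY v) p + fY v p • fderiv ℝ v p) with hG'_def
  have hXu := fX_contDiffOn hU hu
  have hYu := fY_contDiffOn hU hu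
  have hXv := fX_contDiffOn hU hv
  have hYv := fY_contDiffOn hU hv
  have hdF : ∀ p ∈ U, HasFDerivAt F (F' p) p := by
    intro p hp
    exact ((((diffAt_of_c2 hU hu hp).hasFDerivAt.mul
        (diffAt_of_c1 hU hXu hp).hasFDerivAt).const_mul σ).add
      (((diffAt_of_c2 hU hv hp).hasFDerivAt.mul
        (diffAt_of_c1 hU hXv hp).hasFDerivAt).const_mul κ))
  have hdG : ∀ p ∈ U, HasFDerivAt G (G' p) p := by
    intro p hp
    exact ((((diffAt_of_c2 hU hu hp).hasFDerivAt.mul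
        (diffAt_of_c1 hU hYu hp).hasFDerivAt).const_mul σ).add
      (((diffAt_of_c2 hU hv hp).hasFDerivAt.mul
        (diffAt_of_c1 hU hYv hp).hasFDerivAt).const_mul κ))
  -- divergence as a scalar function
  set dvg : ℝ × ℝ → ℝ := fun p => F' p (1, 0) + G' p (0, 1) with hdvg_def
  have hFeval : ∀ p : ℝ × ℝ, F' p (1, 0) =
      σ * (u p * fderiv ℝ (fX u) p (1, 0) + fX u p * fX u p) +
      κ * (v p * fderiv ℝ (fX v) p (1, 0) + fX v p * fX v p) := by
    intro p
    simp only [hF'_def, ContinuousLinearMap.add_apply, ContinuousLinearMap.coe_smul',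
      Pi.smul_apply, smul_eq_mul]
    have e1 : fderiv ℝ u p (1, 0) = fX u p := rfl
    have e2 : fderiv ℝ v p (1, 0) = fX v p := rfl
    rw [e1, e2]
  have hGeval : ∀ p : ℝ × ℝ, G' p (0, 1) =
      σ * (u p * fderiv ℝ (fY u) p (0, 1) + fY u p * fY u p) +
      κ * (v p * fderiv ℝ (fY v) p (0, 1) + fY v p * fY v p) := by
    intro p
    simp only [hG'_def, ContinuousLinearMap.add_apply, ContinuousLinearMap.coe_smul',
      Pi.smul_apply, smul_eq_mul]
    have e1 : fderiv ℝ u p (0, 1) = fY u p := rfl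
    have e2 : fderiv ℝ v p (0, 1) = fY v p := rfl
    rw [e1, e2]
  have hdiv_eq : ∀ p ∈ Icc (0:ℝ) W ×ˢ Icc (0:ℝ) H, dvg p =
      σ * ((fX u p) ^ 2 + (fY u p) ^ 2) + κ * ((fX v p) ^ 2 + (fY v p) ^ 2) +
      (a * S p) * (u p - v p) := by
    intro p hp
    have hk1 := (key p hp).1
    have hk2 := (key p hp).2
    show F' p (1, 0) + G' p (0, 1) = _
    rw [hFeval p, hGeval p]
    linear_combination u p * hk1 + v p * hk2
  -- nonnegativity of the reaction term
  have hT_nonneg : ∀ p : ℝ × ℝ, 0 ≤ (a * S p) * (u p - v p) := by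
    intro p
    have h := sinh_mul_nonneg (b * (φe₁ p - φl₁ p - E)) (b * (φe₂ p - φl₂ p - E))
    have hAB : b * (φe₁ p - φl₁ p - E) - b * (φe₂ p - φl₂ p - E) = b * (u p - v p) := by
      simp only [hu_def, hv_def]; ring
    rw [hAB] at h
    simp only [hS_def]
    nlinarith [h, mul_pos ha hb]
  have hT_zero : ∀ p : ℝ × ℝ, (a * S p) * (u p - v p) = 0 → u p = v p := by
    intro p hzero
    have hAB : b * (φe₁ p - φl₁ p - E) - b * (φe₂ p - φl₂ p - E) = b * (u p - v p) := by
      simp only [hu_def, hv_def]; ring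
    have h2 : (Real.sinh (b * (φe₁ p - φl₁ p - E)) - Real.sinh (b * (φe₂ p - φl₂ p - E))) *
        (b * (φe₁ p - φl₁ p - E) - b * (φe₂ p - φl₂ p - E)) = 0 := by
      rw [hAB]
      have h0 : S p * (u p - v p) = 0 := by
        rw [mul_assoc] at hzero
        rcases mul_eq_zero.mp hzero with h | h
        · exact absurd h ha.ne'
        · exact h
      simp only [hS_def] at h0
      linear_combination b * h0
    have := sinh_mul_eq_zero h2
    have hb' : b * (φe₁ p - φl₁ p - E) = b * (φe₂ p - φl₂ p - E) := this
    have : φe₁ p - φl₁ p = φe₂ p - φl₂ p := by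
      have := mul_left_cancel₀ hb.ne' hb'
      linarith
    simp only [hu_def, hv_def]; linarith
  -- boundary values vanish
  have hFbd : ∀ x ∈ ({0, W} : Set ℝ), ∀ y ∈ Icc (0:ℝ) H, F (x, y) = 0 := by
    intro x hx y hy
    have hxw : x ∈ Icc (0:ℝ) W := by
      rcases hx with h | h
      · rw [h]; exact left_mem_Icc.2 hW.le
      · rw [h]; exact right_mem_Icc.2 hW.le
    have hmem : ((x, y) : ℝ × ℝ) ∈ U := hQU ⟨hxw, hy⟩
    have h1 : fX u (x, y) = 0 := by
      have e1 : fX φe₁ (x, y) = pderivX φe₁ (x, y) := (pderivX_eq (diffAt_of_c2 hU hφe₁ hmem)).symm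
      have e2 : fX φe₂ (x, y) = pderivX φe₂ (x, y) := (pderivX_eq (diffAt_of_c2 hU hφe₂ hmem)).symm
      rw [hfXu _ hmem, e1, e2, (hbcX x hx y hy).1, sub_self]
    have h2 : fX v (x, y) = 0 := by
      have e1 : fX φl₁ (x, y) = pderivX φl₁ (x, y) := (pderivX_eq (diffAt_of_c2 hU hφl₁ hmem)).symm
      have e2 : fX φl₂ (x, y) = pderivX φl₂ (x, y) := (pderivX_eq (diffAt_of_c2 hU hφl₂ hmem)).symm
      rw [hfXv _ hmem, e1, e2, (hbcX x hx y hy).2, sub_self]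
    rw [hF_def]
    simp only [h1, h2, mul_zero, add_zero, zero_add]
  have hGbd : ∀ x ∈ Icc (0:ℝ) W, ∀ y ∈ ({0, H} : Set ℝ), G (x, y) = 0 := by
    intro x hx y hy
    have hyh : y ∈ Icc (0:ℝ) H := by
      rcases hy with h | h
      · rw [h]; exact left_mem_Icc.2 hH.le
      · rw [h]; exact right_mem_Icc.2 hH.le
    have hmem : ((x, y) : ℝ × ℝ) ∈ U := hQU ⟨hx, hyh⟩
    have h1 : fY u (x, y) = 0 := by
      have e1 : fY φe₁ (x, y) = pderivY φe₁ (x, y) := (pderivY_eq (diffAt_of_c2 hU hφe₁ hmem)).symm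
      have e2 : fY φe₂ (x, y) = pderivY φe₂ (x, y) := (pderivY_eq (diffAt_of_c2 hU hφe₂ hmem)).symm
      rw [hfYu _ hmem, e1, e2, (hbcY x hx y hy).1, sub_self]
    have h2 : fY v (x, y) = 0 := by
      have e1 : fY φl₁ (x, y) = pderivY φl₁ (x, y) := (pderivY_eq (diffAt_of_c2 hU hφl₁ hmem)).symm
      have e2 : fY φl₂ (x, y) = pderivY φl₂ (x, y) := (pderivY_eq (diffAt_of_c2 hU hφl₂ hmem)).symm
      rw [hfYv _ hmem, e1, e2, (hbcY x hx y hy).2, sub_self]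
    rw [hG_def]
    simp only [h1, h2, mul_zero, add_zero, zero_add]
  -- continuity
  have hcu : ContinuousOn u U := hu.continuousOn
  have hcv : ContinuousOn v U := hv.continuousOn
  have hcXu : ContinuousOn (fX u) U := hXu.continuousOn
  have hcYu : ContinuousOn (fY u) U := hYu.continuousOn
  have hcXv : ContinuousOn (fX v) U := hXv.continuousOn
  have hcYv : ContinuousOn (fY v) U := hYv.continuousOn
  have hcF : ContinuousOn F U :=
    (continuousOn_const.mul (hcu.mul hcXu)).add (continuousOn_const.mul (hcv.mul hcXv))
  have hcG : ContinuousOn G U :=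
    (continuousOn_const.mul (hcu.mul hcYu)).add (continuousOn_const.mul (hcv.mul hcYv))
  have hcDXu : ContinuousOn (fun p => (fderiv ℝ (fX u) p) (1, 0)) U :=
    (ContinuousLinearMap.apply ℝ ℝ ((1:ℝ), (0:ℝ))).continuous.comp_continuousOn
      (hXu.continuousOn_fderiv_of_isOpen hU le_rfl)
  have hcDYu : ContinuousOn (fun p => (fderiv ℝ (fY u) p) (0, 1)) U :=
    (ContinuousLinearMap.apply ℝ ℝ ((0:ℝ), (1:ℝ))).continuous.comp_continuousOn
      (hYu.continuousOn_fderiv_of_isOpen hU le_rfl)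
  have hcDXv : ContinuousOn (fun p => (fderiv ℝ (fX v) p) (1, 0)) U :=
    (ContinuousLinearMap.apply ℝ ℝ ((1:ℝ), (0:ℝ))).continuous.comp_continuousOn
      (hXv.continuousOn_fderiv_of_isOpen hU le_rfl)
  have hcDYv : ContinuousOn (fun p => (fderiv ℝ (fY v) p) (0, 1)) U :=
    (ContinuousLinearMap.apply ℝ ℝ ((0:ℝ), (1:ℝ))).continuous.comp_continuousOn
      (hYv.continuousOn_fderiv_of_isOpen hU le_rfl)
  have hcdvg : ContinuousOn dvg U := by
    have : dvg = fun p =>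
        (σ * (u p * (fderiv ℝ (fX u) p) (1, 0) + fX u p * fX u p) +
          κ * (v p * (fderiv ℝ (fX v) p) (1, 0) + fX v p * fX v p)) +
        (σ * (u p * (fderiv ℝ (fY u) p) (0, 1) + fY u p * fY u p) +
          κ * (v p * (fderiv ℝ (fY v) p) (0, 1) + fY v p * fY v p)) := by
      funext p
      rw [hdvg_def]
      simp only [hFeval p, hGeval p]
    rw [this]
    exact ((continuousOn_const.mul ((hcu.mul hcDXu).add (hcXu.mul hcXu))).add
        (continuousOn_const.mul ((hcv.mul hcDXv).add (hcXv.mul hcXv)))).add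
      ((continuousOn_const.mul ((hcu.mul hcDYu).add (hcYu.mul hcYu))).add
        (continuousOn_const.mul ((hcv.mul hcDYv).add (hcYv.mul hcYv))))
  have hcompact : IsCompact (Icc (0:ℝ) W ×ˢ Icc (0:ℝ) H) := isCompact_Icc.prod isCompact_Icc
  have hint : MeasureTheory.IntegrableOn dvg (Icc (0:ℝ) W ×ˢ Icc (0:ℝ) H) :=
    (hcdvg.mono hQU).integrableOn_compact hcompact
  -- divergence theorem
  have hthm := MeasureTheory.integral2_divergence_prod_of_hasFDerivAt_off_countable
    F G F' G' 0 0 W H ∅ countable_empty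
    (by rw [uIcc_of_le hW.le, uIcc_of_le hH.le]; exact hcF.mono hQU)
    (by rw [uIcc_of_le hW.le, uIcc_of_le hH.le]; exact hcG.mono hQU)
    (by
      intro p hp
      rw [min_eq_left hW.le, max_eq_right hW.le, min_eq_left hH.le, max_eq_right hH.le] at hp
      exact hdF p (hQiU hp.1))
    (by
      intro p hp
      rw [min_eq_left hW.le, max_eq_right hW.le, min_eq_left hH.le, max_eq_right hH.le] at hp
      exact hdG p (hQiU hp.1))
    (by rw [uIcc_of_le hW.le, uIcc_of_le hH.le]; exact hint)
  have hrhs0 : (((∫ x in (0:ℝ)..W, G (x, H)) - ∫ x in (0:ℝ)..W, G (x, 0)) +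
      ∫ y in (0:ℝ)..H, F (W, y)) - ∫ y in (0:ℝ)..H, F (0, y) = 0 := by
    have e1 : (∫ x in (0:ℝ)..W, G (x, H)) = 0 := by
      rw [intervalIntegral.integral_congr (g := fun _ => (0:ℝ))
        (fun x hx => hGbd x (by rwa [uIcc_of_le hW.le] at hx) H (by simp))]
      simp
    have e2 : (∫ x in (0:ℝ)..W, G (x, 0)) = 0 := by
      rw [intervalIntegral.integral_congr (g := fun _ => (0:ℝ))
        (fun x hx => hGbd x (by rwa [uIcc_of_le hW.le] at hx) 0 (by simp))]
      simp
    have e3 : (∫ y in (0:ℝ)..H, F (W, y)) = 0 := by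
      rw [intervalIntegral.integral_congr (g := fun _ => (0:ℝ))
        (fun y hy => hFbd W (by simp) y (by rwa [uIcc_of_le hH.le] at hy))]
      simp
    have e4 : (∫ y in (0:ℝ)..H, F (0, y)) = 0 := by
      rw [intervalIntegral.integral_congr (g := fun _ => (0:ℝ))
        (fun y hy => hFbd 0 (by simp) y (by rwa [uIcc_of_le hH.le] at hy))]
      simp
    rw [e1, e2, e3, e4]
    ring
  rw [hrhs0] at hthm
  -- convert to a set integral over the product of Ioc's
  have hint' : MeasureTheory.IntegrableOn dvg (Ioc (0:ℝ) W ×ˢ Ioc (0:ℝ) H) :=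
    hint.mono_set (prod_mono Ioc_subset_Icc_self Ioc_subset_Icc_self)
  have hset0 : ∫ p in Ioc (0:ℝ) W ×ˢ Ioc (0:ℝ) H, dvg p = 0 := by
    rw [MeasureTheory.Measure.volume_eq_prod ℝ ℝ, MeasureTheory.setIntegral_prod _ (by rwa [← MeasureTheory.Measure.volume_eq_prod ℝ ℝ])]
    rw [← intervalIntegral.integral_of_le hW.le]
    simp only [← intervalIntegral.integral_of_le hH.le]
    exact hthm
  -- a.e. vanishing
  have hIocQ : Ioc (0:ℝ) W ×ˢ Ioc (0:ℝ) H ⊆ Icc (0:ℝ) W ×ˢ Icc (0:ℝ) H :=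
    prod_mono Ioc_subset_Icc_self Ioc_subset_Icc_self
  have hmeasIoc : MeasurableSet (Ioc (0:ℝ) W ×ˢ Ioc (0:ℝ) H) :=
    (measurableSet_Ioc.prod measurableSet_Ioc)
  have hae : ∀ᵐ p ∂(MeasureTheory.volume.restrict (Ioc (0:ℝ) W ×ˢ Ioc (0:ℝ) H)), dvg p = 0 := by
    have hnn : 0 ≤ᵐ[MeasureTheory.volume.restrict (Ioc (0:ℝ) W ×ˢ Ioc (0:ℝ) H)] dvg := by
      refine MeasureTheory.ae_restrict_of_forall_mem hmeasIoc ?_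
      intro p hp
      rw [hdiv_eq p (hIocQ hp)]
      exact sum_sq_nonneg_aux hσ hκ (hT_nonneg p)
    exact (MeasureTheory.setIntegral_eq_zero_iff_of_nonneg_ae hnn hint').1 hset0
  -- pointwise vanishing on the open rectangle
  have hzero : ∀ p ∈ Ioo (0:ℝ) W ×ˢ Ioo (0:ℝ) H, dvg p = 0 := by
    by_contra hcon
    push_neg at hcon
    obtain ⟨p₀, hp₀, hne⟩ := hcon
    set V : Set (ℝ × ℝ) := (Ioo (0:ℝ) W ×ˢ Ioo (0:ℝ) H) ∩ {q | dvg q ≠ 0} with hV_def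
    have hVopen : IsOpen V := by
      rw [isOpen_iff_mem_nhds]
      intro q hq
      have hqU : q ∈ U := hQiU hq.1
      have hca : ContinuousAt dvg q := (hcdvg.continuousAt (hU.mem_nhds hqU))
      have h1 : {r | dvg r ≠ 0} ∈ nhds q :=
        hca.preimage_mem_nhds (isOpen_compl_singleton.mem_nhds hq.2)
      exact Filter.inter_mem (hQi_open.mem_nhds hq.1) h1
    have hVpos : 0 < MeasureTheory.volume V := hVopen.measure_pos _ ⟨p₀, hp₀, hne⟩
    have hnull : MeasureTheory.volume ({q | dvg q ≠ 0} ∩ (Ioc (0:ℝ) W ×ˢ Ioc (0:ℝ) H)) = 0 := by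
      have := MeasureTheory.ae_iff.mp hae
      rwa [MeasureTheory.Measure.restrict_apply' hmeasIoc] at this
    have hVsub : V ⊆ {q | dvg q ≠ 0} ∩ (Ioc (0:ℝ) W ×ˢ Ioc (0:ℝ) H) := by
      intro q hq
      exact ⟨hq.2, prod_mono Ioo_subset_Ioc_self Ioo_subset_Ioc_self hq.1⟩
    exact absurd (MeasureTheory.measure_mono_null hVsub hnull) hVpos.ne'
  -- extract vanishing gradients and u = v
  have hvanish : ∀ p ∈ Ioo (0:ℝ) W ×ˢ Ioo (0:ℝ) H,
      fX u p = 0 ∧ fY u p = 0 ∧ fX v p = 0 ∧ fY v p = 0 ∧ u p = v p := by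
    intro p hp
    have h0 : σ * ((fX u p) ^ 2 + (fY u p) ^ 2) + κ * ((fX v p) ^ 2 + (fY v p) ^ 2) +
        (a * S p) * (u p - v p) = 0 := by
      rw [← hdiv_eq p (hQiQ hp)]; exact hzero p hp
    obtain ⟨e1, e2, e3, e4, e5⟩ := sum_sq_zero_aux hσ hκ (hT_nonneg p) h0
    exact ⟨e1, e2, e3, e4, hT_zero p e5⟩
  -- constancy on the open rectangle
  have hconv : Convex ℝ (Ioo (0:ℝ) W ×ˢ Ioo (0:ℝ) H) := (convex_Ioo 0 W).prod (convex_Ioo 0 H)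
  have hfu0 : ∀ q ∈ Ioo (0:ℝ) W ×ˢ Ioo (0:ℝ) H, fderivWithin ℝ u (Ioo (0:ℝ) W ×ˢ Ioo (0:ℝ) H) q = 0 := by
    intro q hq
    rw [fderivWithin_of_isOpen hQi_open hq]
    exact clm_eq_zero (hvanish q hq).1 (hvanish q hq).2.1
  have hfv0 : ∀ q ∈ Ioo (0:ℝ) W ×ˢ Ioo (0:ℝ) H, fderivWithin ℝ v (Ioo (0:ℝ) W ×ˢ Ioo (0:ℝ) H) q = 0 := by
    intro q hq
    rw [fderivWithin_of_isOpen hQi_open hq]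
    exact clm_eq_zero (hvanish q hq).2.2.1 (hvanish q hq).2.2.2.1
  have hp₀ : ((W / 2, H / 2) : ℝ × ℝ) ∈ Ioo (0:ℝ) W ×ˢ Ioo (0:ℝ) H :=
    ⟨⟨by linarith, by linarith⟩, ⟨by linarith, by linarith⟩⟩
  have hdiffu : DifferentiableOn ℝ u (Ioo (0:ℝ) W ×ˢ Ioo (0:ℝ) H) :=
    (hu.differentiableOn (by norm_num)).mono hQiU
  have hdiffv : DifferentiableOn ℝ v (Ioo (0:ℝ) W ×ˢ Ioo (0:ℝ) H) :=
    (hv.differentiableOn (by norm_num)).mono hQiU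
  have hconstu : ∀ q ∈ Ioo (0:ℝ) W ×ˢ Ioo (0:ℝ) H, u q = u (W / 2, H / 2) :=
    fun q hq => hconv.is_const_of_fderivWithin_eq_zero hdiffu hfu0 hq hp₀
  have hconstv : ∀ q ∈ Ioo (0:ℝ) W ×ˢ Ioo (0:ℝ) H, v q = v (W / 2, H / 2) :=
    fun q hq => hconv.is_const_of_fderivWithin_eq_zero hdiffv hfv0 hq hp₀
  -- extend to the closed rectangle by continuity
  have hclos : Icc (0:ℝ) W ×ˢ Icc (0:ℝ) H ⊆ closure (Ioo (0:ℝ) W ×ˢ Ioo (0:ℝ) H) := by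
    rw [closure_prod_eq, closure_Ioo hW.ne, closure_Ioo hH.ne]
  have hequ : EqOn u (fun _ => u (W / 2, H / 2)) (Icc (0:ℝ) W ×ˢ Icc (0:ℝ) H) :=
    Set.EqOn.of_subset_closure (fun q hq => hconstu q hq) (hcu.mono hQU)
      continuousOn_const hQiQ hclos
  have heqv : EqOn v (fun _ => v (W / 2, H / 2)) (Icc (0:ℝ) W ×ˢ Icc (0:ℝ) H) :=
    Set.EqOn.of_subset_closure (fun q hq => hconstv q hq) (hcv.mono hQU)
      continuousOn_const hQiQ hclos
  have hCC : v (W / 2, H / 2) = u (W / 2, H / 2) := ((hvanish _ hp₀).2.2.2.2).symm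
  refine ⟨u (W / 2, H / 2), fun p hp => ⟨?_, ?_⟩⟩
  · have h := hequ hp
    simp only [hu_def] at h ⊢
    linarith [h]
  · have h := heqv hp
    rw [hCC] at h
    simp only [hv_def] at h ⊢
    linarith [h]
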